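/- Let X be a Tychonoff space with a countable π-base. If C_ph(X) (the bi-point-open topology) is separable, then X is an R-separable submetrizable space. -/

import Mathlib

open Set TopologicalSpace Filter

/-- The open-point topology on `C(X, ℝ)`, generated by the sets
`[U, r]⁻ = {f | ∃ x ∈ U, f x = r}` for `U` open in `X` and `r : ℝ`. -/
def openPointTop (X : Type*) [TopologicalSpace X] : TopologicalSpace C(X, ℝ) :=
  generateFrom {S | ∃ (U : Set X) (r : ℝ), IsOpen U ∧ S = {f : C(X, ℝ) | ∃ x ∈ U, f x = r}}

/-- The point-open topology (topology of pointwise convergence) on `C(X, ℝ)`. -/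
def pointOpenTop (X : Type*) [TopologicalSpace X] : TopologicalSpace C(X, ℝ) :=
  generateFrom {S | ∃ (x : X) (V : Set ℝ), IsOpen V ∧ S = {f : C(X, ℝ) | f x ∈ V}}

/-- The bi-compact-open topology `kh`: the join (coarsest common refinement) of the
compact-open topology and the open-point topology.  In Mathlib's order on
`TopologicalSpace` (where smaller = finer), this join is `⊓`. -/
def biCompactOpenTop (X : Type*) [TopologicalSpace X] : TopologicalSpace C(X, ℝ) :=
  ContinuousMap.compactOpen ⊓ openPointTop X

/-- The bi-point-open topology `ph`: the join of the point-open topology and the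
open-point topology. -/
def biPointOpenTop (X : Type*) [TopologicalSpace X] : TopologicalSpace C(X, ℝ) :=
  pointOpenTop X ⊓ openPointTop X

/-- `lc X` is the set of points of `X` having a compact neighborhood. -/
def lcSet (X : Type*) [TopologicalSpace X] : Set X :=
  {x | ∃ K : Set X, IsCompact K ∧ K ∈ nhds x}

/-- A set `A` is `Gδ`-dense if every nonempty `Gδ`-set meets it. -/
def GdeltaDense {X : Type*} [TopologicalSpace X] (A : Set X) : Prop :=
  ∀ G : Set X, IsGδ G → G.Nonempty → (G ∩ A).Nonempty

/-- A nonempty set `B` is an `R`-set if countably many continuous real functions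
map it onto all of `ℝ`. -/
def IsRSet {X : Type*} [TopologicalSpace X] (B : Set X) : Prop :=
  B.Nonempty ∧ ∃ f : ℕ → C(X, ℝ), (⋃ n, (f n) '' B) = Set.univ

/-- `X` is `R`-separable if there is a countable collection of `R`-sets such that
every nonempty open set contains a member of the collection. -/
def RSeparable (X : Type*) [TopologicalSpace X] : Prop :=
  ∃ S : ℕ → Set X, (∀ n, IsRSet (S n)) ∧
    ∀ U : Set X, IsOpen U → U.Nonempty → ∃ n, S n ⊆ U

/-- A topology is submetrizable if it is finer than some metrizable topology. -/
def Submetrizable (α : Type*) [t : TopologicalSpace α] : Prop :=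
  ∃ t' : TopologicalSpace α, @MetrizableSpace α t' ∧ t ≤ t'

/-- `X` is hemicompact if there is a sequence of compact sets cofinal in the
compact subsets of `X`. -/
def Hemicompact (X : Type*) [TopologicalSpace X] : Prop :=
  ∃ K : ℕ → Set X, (∀ n, IsCompact (K n)) ∧ ∀ A : Set X, IsCompact A → ∃ n, A ⊆ K n

/-- `X` is almost σ-compact if it has a dense σ-compact subset. -/
def AlmostSigmaCompact (X : Type*) [TopologicalSpace X] : Prop :=
  ∃ K : ℕ → Set X, (∀ n, IsCompact (K n)) ∧ Dense (⋃ n, K n)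

theorem stmt18 {X : Type*} [TopologicalSpace X] [T2Space X] [CompletelyRegularSpace X] (P : ℕ → Set X)
    (hopen : ∀ n, IsOpen (P n)) (hne : ∀ n, (P n).Nonempty)
    (hpi : ∀ U : Set X, IsOpen U → U.Nonempty → ∃ n, P n ⊆ U)
    (hsep : @SeparableSpace C(X, ℝ) (biPointOpenTop X)) :
    RSeparable X ∧ Submetrizable X := by
  obtain ⟨s, hsc, hsd⟩ := @TopologicalSpace.exists_countable_dense _ (biPointOpenTop X) hsep
  have hnece : Nonempty C(X, ℝ) := ⟨ContinuousMap.const X 0⟩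
  have hsne : s.Nonempty := (@Dense.nonempty_iff _ (biPointOpenTop X) s hsd).2 hnece
  obtain ⟨g, hg⟩ := Set.Countable.exists_eq_range hsc hsne
  -- dense sets meet nonempty ph-open sets
  have hmeet : ∀ W : Set C(X, ℝ), @IsOpen _ (biPointOpenTop X) W → W.Nonempty →
      ∃ k, g k ∈ W := by
    intro W hW hWne
    have := @Dense.inter_open_nonempty _ (biPointOpenTop X) s hsd W hW hWne
    obtain ⟨f, hfW, hfs⟩ := this
    rw [hg] at hfs
    obtain ⟨k, rfl⟩ := hfs
    exact ⟨k, hfW⟩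
  -- open-point basic sets are ph-open
  have hopOpen : ∀ (U : Set X) (r : ℝ), IsOpen U →
      @IsOpen _ (biPointOpenTop X) {f : C(X, ℝ) | ∃ x ∈ U, f x = r} := by
    intro U r hU
    have h1 : @IsOpen _ (openPointTop X) {f : C(X, ℝ) | ∃ x ∈ U, f x = r} :=
      TopologicalSpace.GenerateOpen.basic _ ⟨U, r, hU, rfl⟩
    exact (inf_le_right : biPointOpenTop X ≤ openPointTop X) _ h1
  -- point-open basic sets are ph-open
  have hpoOpen : ∀ (x : X) (V : Set ℝ), IsOpen V →
      @IsOpen _ (biPointOpenTop X) {f : C(X, ℝ) | f x ∈ V} := by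
    intro x V hV
    have h1 : @IsOpen _ (pointOpenTop X) {f : C(X, ℝ) | f x ∈ V} :=
      TopologicalSpace.GenerateOpen.basic _ ⟨x, V, hV, rfl⟩
    exact (inf_le_left : biPointOpenTop X ≤ pointOpenTop X) _ h1
  -- key: for every open nonempty U and real r, some g k takes value r on U
  have key : ∀ (U : Set X), IsOpen U → U.Nonempty → ∀ r : ℝ, ∃ k, ∃ x ∈ U, g k x = r := by
    intro U hU hUne r
    obtain ⟨x₀, hx₀⟩ := hUne
    obtain ⟨k, hk⟩ := hmeet {f : C(X, ℝ) | ∃ x ∈ U, f x = r} (hopOpen U r hU)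
      ⟨ContinuousMap.const X r, ⟨x₀, hx₀, rfl⟩⟩
    exact ⟨k, hk⟩
  constructor
  · -- R-separability
    refine ⟨P, fun n => ⟨hne n, g, ?_⟩, hpi⟩
    rw [Set.eq_univ_iff_forall]
    intro r
    obtain ⟨k, x, hxP, hgx⟩ := key (P n) (hopen n) (hne n) r
    exact Set.mem_iUnion.2 ⟨k, x, hxP, hgx⟩
  · -- submetrizability
    -- the g k separate points
    have hsepPts : ∀ x y : X, x ≠ y → ∃ k, g k x ≠ g k y := by
      intro x y hxy
      obtain ⟨f, hf, hfx, hfy⟩ := CompletelyRegularSpace.completely_regular x {y}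
        isClosed_singleton (by simpa using hxy)
      set F : C(X, ℝ) := ⟨fun z => (f z : ℝ), continuous_subtype_val.comp hf⟩
      have hW : @IsOpen _ (biPointOpenTop X)
          ({h : C(X, ℝ) | h x ∈ Set.Iio (1/2 : ℝ)} ∩ {h : C(X, ℝ) | h y ∈ Set.Ioi (1/2 : ℝ)}) :=
        @IsOpen.inter _ (biPointOpenTop X) _ _ (hpoOpen x _ isOpen_Iio) (hpoOpen y _ isOpen_Ioi)
      have hFmem : F ∈ {h : C(X, ℝ) | h x ∈ Set.Iio (1/2 : ℝ)} ∩
          {h : C(X, ℝ) | h y ∈ Set.Ioi (1/2 : ℝ)} := by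
        constructor
        · show (f x : ℝ) < 1/2
          rw [hfx]; norm_num
        · show (1/2 : ℝ) < (f y : ℝ)
          have : f y = 1 := hfy (Set.mem_singleton y)
          rw [this]; norm_num
      obtain ⟨k, hk1, hk2⟩ := hmeet _ hW ⟨F, hFmem⟩
      refine ⟨k, fun h => ?_⟩
      have h1 : g k x < 1/2 := hk1
      have h2 : (1/2 : ℝ) < g k y := hk2
      rw [h] at h1; linarith
    -- embed X into ℝ^ℕ
    set e : X → (ℕ → ℝ) := fun x k => g k x with he
    have hecont : Continuous e := continuous_pi fun k => (g k).continuous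
    have heinj : Function.Injective e := by
      intro x y hxy
      by_contra hne'
      obtain ⟨k, hk⟩ := hsepPts x y hne'
      exact hk (congrFun hxy k)
    refine ⟨TopologicalSpace.induced e inferInstance, ?_, continuous_iff_le_induced.1 hecont⟩
    letI t' : TopologicalSpace X := TopologicalSpace.induced e inferInstance
    have hemb : @Topology.IsEmbedding X (ℕ → ℝ) t' _ e := ⟨⟨rfl⟩, heinj⟩
    exact @Topology.IsEmbedding.metrizableSpace X (ℕ → ℝ) t' _ _ e hemb
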